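/- For 0 < u ≤ f with u ≤ f/l and 1/l ≤ f ≤ 1 (l ≥ 2), one has (e^{f+ku} − e^{(k+1)u})/(e^{fk} − e^{ku}) = (e^f − 1)/(e^{fk} − 1) + O(f/l); moreover (e^f − 1)/(e^{fk} − 1) ≤ (e − 1)/(e^k − 1) for f ≤ 1 and k ≥ 2. -/
import Mathlib


open Real


lemma exp_lb' (x : ℝ) : x ≤ Real.exp x - 1 := by
  nlinarith [Real.add_one_le_exp x]

lemma exp_key' (x : ℝ) : Real.exp x * (1 - x) ≤ 1 := by
  have h1 : Real.exp x * Real.exp (-x) = 1 := by rw [← Real.exp_add]; simp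
  have h2 := Real.add_one_le_exp (-x)
  nlinarith [Real.exp_pos x]

lemma exp_ub1' (x : ℝ) : Real.exp x - 1 ≤ x * Real.exp x := by
  nlinarith [exp_key' x]

lemma exp_ub2' (x : ℝ) (hx : 0 ≤ x) : Real.exp x - 1 ≤ x + x^2 * Real.exp x := by
  nlinarith [exp_key' x, mul_le_mul_of_nonneg_left (exp_ub1' x) hx]

lemma arithA (k E u f : ℝ) (hk : 2 ≤ k) (hE : 1 ≤ E) (hu : 0 < u) (huf : u ≤ f) (hf1 : f ≤ 1) :
    -(4*k^2*E^3*(u*f^2)) ≤ f*(k*u) - (u + u^2*E)*(f*k + (f*k)^2*E) := by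
  have hf0 : 0 < f := lt_of_lt_of_le hu huf
  have h1 : u^2 ≤ u*f := by nlinarith
  have hE3 : E ≤ E^3 := by nlinarith [mul_nonneg (mul_nonneg (by linarith : (0:ℝ) ≤ E) (by linarith : (0:ℝ) ≤ E - 1)) (by linarith : (0:ℝ) ≤ E + 1)]
  have hE23 : E^2 ≤ E^3 := by nlinarith [mul_nonneg (sq_nonneg E) (by linarith : (0:ℝ) ≤ E - 1)]
  have hk2 : k ≤ k^2 := by nlinarith
  have h2 : u*f^2*k^2*E ≤ u*f^2*k^2*E^3 :=
    mul_le_mul_of_nonneg_left hE3 (by positivity)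
  have h3 : u^2*f*k*E ≤ u*f^2*k^2*E^3 := by
    have s1 : u^2*(f*k*E) ≤ (u*f)*(f*k*E) := mul_le_mul_of_nonneg_right h1 (by positivity)
    have s2 : (u*f^2)*(k*E) ≤ (u*f^2)*(k^2*E^3) := by
      have : k*E ≤ k^2*E^3 := by nlinarith [mul_le_mul_of_nonneg_left hE3 (by linarith : (0:ℝ) ≤ k), mul_le_mul_of_nonneg_right hk2 (by positivity : (0:ℝ) ≤ E^3)]
      exact mul_le_mul_of_nonneg_left this (by positivity)
    nlinarith [s1, s2]
  have h4 : u^2*f^2*k^2*E^2 ≤ u*f^2*k^2*E^3 := by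
    have s1 : u^2*(f^2*k^2*E^2) ≤ (u*f)*(f^2*k^2*E^2) := mul_le_mul_of_nonneg_right h1 (by positivity)
    have s2 : (u*f^2)*(f*k^2*E^2) ≤ (u*f^2)*(k^2*E^3) := by
      have : f*k^2*E^2 ≤ k^2*E^3 := by nlinarith [mul_le_mul_of_nonneg_left hE23 (by positivity : (0:ℝ) ≤ k^2), sq_nonneg (k*E)]
      exact mul_le_mul_of_nonneg_left this (by positivity)
    nlinarith [s1, s2]
  nlinarith [h2, h3, h4, mul_pos hu hf0]

lemma arithB (k E u f : ℝ) (hk : 2 ≤ k) (hE : 1 ≤ E) (hu : 0 < u) (huf : u ≤ f) (hf1 : f ≤ 1) :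
    (f + f^2*E)*(k*u + (k*u)^2*E) - u*(f*k) + (k*u*E)*(f*E)*(f*k*E) ≤ 4*k^2*E^3*(u*f^2) := by
  have hf0 : 0 < f := lt_of_lt_of_le hu huf
  have h1 : u^2 ≤ u*f := by nlinarith
  have hE3 : E ≤ E^3 := by nlinarith [mul_nonneg (mul_nonneg (by linarith : (0:ℝ) ≤ E) (by linarith : (0:ℝ) ≤ E - 1)) (by linarith : (0:ℝ) ≤ E + 1)]
  have hE23 : E^2 ≤ E^3 := by nlinarith [mul_nonneg (sq_nonneg E) (by linarith : (0:ℝ) ≤ E - 1)]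
  have hk2 : k ≤ k^2 := by nlinarith
  have g1 : f*k^2*u^2*E ≤ k^2*E^3*(u*f^2) := by
    have s1 : u^2*(f*k^2*E) ≤ (u*f)*(f*k^2*E) := mul_le_mul_of_nonneg_right h1 (by positivity)
    have s2 : (u*f^2)*(k^2*E) ≤ (u*f^2)*(k^2*E^3) := by
      have : k^2*E ≤ k^2*E^3 := mul_le_mul_of_nonneg_left hE3 (by positivity)
      exact mul_le_mul_of_nonneg_left this (by positivity)
    nlinarith [s1, s2]
  have g2 : f^2*k*u*E ≤ k^2*E^3*(u*f^2) := by
    have h : k*E ≤ k^2*E^3 := by nlinarith [mul_le_mul_of_nonneg_left hE3 (by linarith : (0:ℝ) ≤ k), mul_le_mul_of_nonneg_right hk2 (by positivity : (0:ℝ) ≤ E^3)]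
    have := mul_le_mul_of_nonneg_left h (by positivity : (0:ℝ) ≤ u*f^2)
    nlinarith [this]
  have g3 : f^2*k^2*u^2*E^2 ≤ k^2*E^3*(u*f^2) := by
    have s1 : u^2*(f^2*k^2*E^2) ≤ (u*f)*(f^2*k^2*E^2) := mul_le_mul_of_nonneg_right h1 (by positivity)
    have s2 : (u*f^2)*(f*k^2*E^2) ≤ (u*f^2)*(k^2*E^3) := by
      have : f*k^2*E^2 ≤ k^2*E^3 := by nlinarith [mul_le_mul_of_nonneg_left hE23 (by positivity : (0:ℝ) ≤ k^2), sq_nonneg (k*E)]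
      exact mul_le_mul_of_nonneg_left this (by positivity)
    nlinarith [s1, s2]
  nlinarith [g1, g2, g3]


set_option maxHeartbeats 1000000 in
/-- For k ≥ 2 there is a constant C such that for 0 < u ≤ f, u ≤ f/l, 1/l ≤ f ≤ 1, l ≥ 2:
(e^{f+ku} − e^{(k+1)u})/(e^{fk} − e^{ku}) = (e^f − 1)/(e^{fk} − 1) + O(f/l);
moreover (e^f − 1)/(e^{fk} − 1) ≥ (e − 1)/(e^k − 1) for 0 < f ≤ 1. -/
theorem stmt_19 (k : ℝ) (hk : 2 ≤ k) :
    (∃ C : ℝ, 0 < C ∧ ∀ (l : ℕ) (f u : ℝ), 2 ≤ l → 0 < u → u ≤ f → u ≤ f / (l : ℝ) →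
      1 / (l : ℝ) ≤ f → f ≤ 1 →
      |(Real.exp (f + k * u) - Real.exp ((k + 1) * u)) /
          (Real.exp (f * k) - Real.exp (k * u)) -
        (Real.exp f - 1) / (Real.exp (f * k) - 1)| ≤ C * (f / (l : ℝ))) ∧
    (∀ f : ℝ, 0 < f → f ≤ 1 →
      (Real.exp 1 - 1) / (Real.exp k - 1) ≤ (Real.exp f - 1) / (Real.exp (f * k) - 1)) := by
  constructor
  ·
      refine ⟨2 * k^2 * (Real.exp k)^3 + 1, by positivity, ?_⟩
      intro l f u hl hu huf hul hfl hf1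
      have hl2 : (2:ℝ) ≤ (l:ℝ) := by exact_mod_cast hl
      have hlpos : (0:ℝ) < (l:ℝ) := by linarith
      have hf0 : 0 < f := lt_of_lt_of_le hu huf
      have hk0 : (0:ℝ) < k := by linarith
      have hu2 : u ≤ f / 2 := le_trans hul (by
        apply div_le_div_of_nonneg_left hf0.le (by norm_num) hl2)
      have hu1 : u ≤ 1 := by linarith
      set a := Real.exp f with ha
      set b := Real.exp u with hb
      set c := Real.exp (f*k) with hc
      set d := Real.exp (k*u) with hd
      set E := Real.exp k with hE
      have hE1 : (1:ℝ) ≤ E := by nlinarith [exp_lb' k]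
      have haE : a ≤ E := Real.exp_le_exp.mpr (by linarith)
      have hbE : b ≤ E := Real.exp_le_exp.mpr (by linarith)
      have hcE : c ≤ E := Real.exp_le_exp.mpr (by nlinarith)
      have hdE : d ≤ E := Real.exp_le_exp.mpr (by nlinarith)
      have h1a : f ≤ a - 1 := exp_lb' f
      have h1b : u ≤ b - 1 := exp_lb' u
      have h1c : f*k ≤ c - 1 := exp_lb' (f*k)
      have h1d : k*u ≤ d - 1 := exp_lb' (k*u)
      have h2a : a - 1 ≤ f + f^2 * E := by
        have h := exp_ub2' f hf0.le
        have := mul_le_mul_of_nonneg_left haE (sq_nonneg f)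
        linarith
      have h2b : b - 1 ≤ u + u^2 * E := by
        have h := exp_ub2' u hu.le
        have := mul_le_mul_of_nonneg_left hbE (sq_nonneg u)
        linarith
      have h2c : c - 1 ≤ f*k + (f*k)^2 * E := by
        have h := exp_ub2' (f*k) (by positivity)
        have := mul_le_mul_of_nonneg_left hcE (sq_nonneg (f*k))
        linarith
      have h2d : d - 1 ≤ k*u + (k*u)^2 * E := by
        have h := exp_ub2' (k*u) (by positivity)
        have := mul_le_mul_of_nonneg_left hdE (sq_nonneg (k*u))
        linarith
      have h3a : a - 1 ≤ f * E := le_trans (exp_ub1' f) (by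
        have := mul_le_mul_of_nonneg_left haE hf0.le; linarith)
      have h3c : c - 1 ≤ f*k * E := le_trans (exp_ub1' (f*k)) (by
        have := mul_le_mul_of_nonneg_left hcE (by positivity : (0:ℝ) ≤ f*k); linarith)
      have h3d : d - 1 ≤ k*u * E := le_trans (exp_ub1' (k*u)) (by
        have := mul_le_mul_of_nonneg_left hdE (by positivity : (0:ℝ) ≤ k*u); linarith)
      have hab : b ≤ a := Real.exp_le_exp.mpr huf
      have hcd : d < c := Real.exp_lt_exp.mpr (by nlinarith)
      have hc1 : (0:ℝ) < c - 1 := by nlinarith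
      have hd1' : (1:ℝ) ≤ d := by nlinarith [exp_lb' (k*u), mul_pos hk0 hu]
      have hcd_lb : f ≤ c - d := by
        have hdiff : c - d = d * (Real.exp (f*k - k*u) - 1) := by
          rw [mul_sub, mul_one, hd, ← Real.exp_add, show k*u + (f*k - k*u) = f*k from by ring, hc]
        have hfk : f ≤ f*k - k*u := by nlinarith [mul_le_mul_of_nonneg_left hu2 hk0.le, mul_nonneg hf0.le (by linarith : (0:ℝ) ≤ k - 2)]
        have hX : f ≤ Real.exp (f*k - k*u) - 1 := le_trans hfk (exp_lb' _)
        have hXn : (0:ℝ) ≤ Real.exp (f*k - k*u) - 1 := by linarith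
        have := mul_le_mul_of_nonneg_right hd1' hXn
        rw [hdiff]; linarith
      have hcd0 : (0:ℝ) < c - d := by linarith
      have key : (Real.exp (f + k * u) - Real.exp ((k + 1) * u)) / (c - d) - (a - 1) / (c - 1)
          = (((a-1)*(d-1) - (b-1)*(c-1)) + (d-1)*(a-b)*(c-1)) / ((c - d)*(c-1)) := by
        rw [Real.exp_add, show (k+1)*u = u + k*u from by ring, Real.exp_add, ← ha, ← hb, ← hd]
        have hne1 : c - d ≠ 0 := ne_of_gt hcd0
        have hne2 : c - 1 ≠ 0 := ne_of_gt hc1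
        field_simp
        ring
      rw [key, abs_div, abs_of_pos (by positivity : (0:ℝ) < (c-d)*(c-1))]
      have hN : |((a-1)*(d-1) - (b-1)*(c-1)) + (d-1)*(a-b)*(c-1)| ≤ 4*k^2*E^3 * (u*f^2) := by
        rw [abs_le]
        constructor
        · have hP : (b-1)*(c-1) ≤ (u + u^2*E)*(f*k + (f*k)^2*E) :=
            mul_le_mul h2b h2c (by linarith) (by positivity)
          have hQ : f*(k*u) ≤ (a-1)*(d-1) :=
            mul_le_mul h1a h1d (by positivity) (by linarith)
          have hN2 : 0 ≤ (d-1)*(a-b)*(c-1) :=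
            mul_nonneg (mul_nonneg (by linarith) (by linarith)) hc1.le
          linarith [arithA k E u f hk hE1 hu huf hf1]
        · have hP : (a-1)*(d-1) ≤ (f + f^2*E)*(k*u + (k*u)^2*E) :=
            mul_le_mul h2a h2d (by linarith) (by positivity)
          have hQ : u*(f*k) ≤ (b-1)*(c-1) :=
            mul_le_mul h1b h1c (by positivity) (by linarith)
          have hN2 : (d-1)*(a-b)*(c-1) ≤ (k*u*E)*(f*E)*(f*k*E) := by
            have hab' : a - b ≤ f * E := by linarith [h3a]
            have h := mul_le_mul h3d hab' (by linarith) (by positivity)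
            exact mul_le_mul h h3c hc1.le (by positivity)
          linarith [arithB k E u f hk hE1 hu huf hf1]
      have hden : 2 * f^2 ≤ (c - d)*(c-1) := by nlinarith [mul_le_mul hcd_lb h1c (by positivity) hcd0.le]
      have step : |((a-1)*(d-1) - (b-1)*(c-1)) + (d-1)*(a-b)*(c-1)| / ((c-d)*(c-1))
          ≤ (4*k^2*E^3 * (u*f^2)) / (2*f^2) :=
        div_le_div₀ (by positivity) hN (by positivity) hden
      have hsimp : (4*k^2*E^3 * (u*f^2)) / (2*f^2) = 2*k^2*E^3 * u := by
        field_simp; ring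
      rw [hsimp] at step
      have final : 2*k^2*E^3 * u ≤ (2 * k^2 * E^3 + 1) * (f / l) := by
        have h1 : 2*k^2*E^3 * u ≤ 2*k^2*E^3 * (f/l) :=
          mul_le_mul_of_nonneg_left hul (by positivity)
        have h2 : (0:ℝ) ≤ f / l := by positivity
        nlinarith
      exact le_trans step final
  · intro f hf0 hf1
    have hk0 : (0:ℝ) < k := by linarith
    have h1 : (0:ℝ) < Real.exp k - 1 := by nlinarith [exp_lb' k]
    have h2 : (0:ℝ) < Real.exp (f*k) - 1 := by nlinarith [exp_lb' (f*k), mul_pos hf0 hk0]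
    rw [div_le_div_iff₀ h1 h2]
    set F : ℝ → ℝ := fun x => (Real.exp f - 1) * (Real.exp x - 1) - (Real.exp 1 - 1) * (Real.exp (f*x) - 1) with hFdef
    have hder : ∀ x : ℝ, HasDerivAt F ((Real.exp f - 1) * Real.exp x - (Real.exp 1 - 1) * (Real.exp (f*x) * f)) x := by
      intro x
      have hx1 : HasDerivAt (fun y : ℝ => Real.exp y - 1) (Real.exp x) x := (Real.hasDerivAt_exp x).sub_const 1
      have hx2 : HasDerivAt (fun y : ℝ => f * y) f x := by simpa using (hasDerivAt_id x).const_mul f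
      have hx3 : HasDerivAt (fun y : ℝ => Real.exp (f*y) - 1) (Real.exp (f*x) * f) x :=
        (((Real.hasDerivAt_exp (f*x)).comp x hx2)).sub_const 1
      exact (hx1.const_mul (Real.exp f - 1)).sub (hx3.const_mul (Real.exp 1 - 1))
    -- key derivative inequality
    have hA : f * (Real.exp 1 - 1) * Real.exp (f-1) ≤ Real.exp f - 1 := by
      have hconv := convexOn_exp.2 (Set.mem_univ (1:ℝ)) (Set.mem_univ (0:ℝ))
        (by linarith : (0:ℝ) ≤ 1 - f) hf0.le (by ring)
      simp only [smul_eq_mul, mul_one, mul_zero, add_zero, Real.exp_zero] at hconv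
      have hm : Real.exp (f-1) * Real.exp (1-f) = 1 := by rw [← Real.exp_add]; norm_num
      have hm2 : Real.exp (f-1) * Real.exp 1 = Real.exp f := by
        rw [← Real.exp_add]; ring_nf
      nlinarith [mul_le_mul_of_nonneg_right hconv (Real.exp_pos (f-1)).le, Real.exp_pos (f-1)]
    have hmono : MonotoneOn F (Set.Ici (1:ℝ)) := by
      apply monotoneOn_of_deriv_nonneg (convex_Ici 1)
      · apply Continuous.continuousOn; fun_prop
      · intro x hx
        exact (hder x).differentiableAt.differentiableWithinAt
      · intro x hx
        rw [interior_Ici] at hx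
        rw [(hder x).deriv]
        have hx1 : (1:ℝ) ≤ x := le_of_lt hx
        have hB : Real.exp (f*x) = Real.exp x * Real.exp ((f-1)*x) := by
          rw [← Real.exp_add]; ring_nf
        have hC : Real.exp ((f-1)*x) ≤ Real.exp (f-1) := by
          apply Real.exp_le_exp.mpr; nlinarith
        have hpos : (0:ℝ) ≤ (Real.exp 1 - 1) * f := by nlinarith [exp_lb' 1]
        have h6 : (Real.exp 1 - 1) * f * Real.exp ((f-1)*x) ≤ (Real.exp 1 - 1) * f * Real.exp (f-1) :=
          mul_le_mul_of_nonneg_left hC hpos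
        have h7 : (Real.exp 1 - 1) * f * Real.exp (f-1) ≤ Real.exp f - 1 := by linarith [hA]
        have h8 := mul_le_mul_of_nonneg_right (h6.trans h7) (Real.exp_pos x).le
        calc (0:ℝ) ≤ (Real.exp f - 1) * Real.exp x - ((Real.exp 1 - 1) * f * Real.exp ((f-1)*x)) * Real.exp x := by linarith
          _ = (Real.exp f - 1) * Real.exp x - (Real.exp 1 - 1) * (Real.exp (f*x) * f) := by rw [hB]; ring
    have h0 : F 1 = 0 := by simp only [hFdef, mul_one]; ring
    have hmk := hmono (Set.mem_Ici.mpr le_rfl) (Set.mem_Ici.mpr (by linarith : (1:ℝ) ≤ k)) (by linarith)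
    rw [h0] at hmk
    simp only [hFdef] at hmk
    linarith
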